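/- Let n ≥ 3 and let D_{2n} be the dihedral group of order 2n. If g lies in the commutator subgroup of D_{2n}, then f_3(g) > 0; that is, there exist x, y, z ∈ D_{2n} with [x,y] = [x,z] = [y,z] = g. -/

import Mathlib

/-- the number of ordered triples `(x,y,z)` with `[x,y] = [x,z] = [y,z] = g`,
where `[x,y] = x⁻¹y⁻¹xy`. -/
noncomputable def f3 {G : Type*} [Group G] (g : G) : ℕ :=
  Nat.card {t : G × G × G //
    t.1⁻¹ * t.2.1⁻¹ * t.1 * t.2.1 = g ∧
    t.1⁻¹ * t.2.2⁻¹ * t.1 * t.2.2 = g ∧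
    t.2.1⁻¹ * t.2.2⁻¹ * t.2.1 * t.2.2 = g}

open DihedralGroup in
lemma inv_r' {n : ℕ} (i : ZMod n) : (r i)⁻¹ = r (-i) := by
  symm; apply eq_inv_of_mul_eq_one_left; simp [r_mul_r, one_def, -r_zero]

open DihedralGroup in
lemma inv_sr' {n : ℕ} (i : ZMod n) : (sr i)⁻¹ = sr i := by
  symm; exact eq_inv_of_mul_eq_one_left (sr_mul_self i)

open DihedralGroup in
lemma mem_comm_r2 {n : ℕ} (g : DihedralGroup n)
    (hg : g ∈ commutator (DihedralGroup n)) : ∃ k : ZMod n, g = r (2 * k) := by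
  let H : Subgroup (DihedralGroup n) :=
    { carrier := {g | ∃ k : ZMod n, g = r (2 * k)}
      one_mem' := ⟨0, by simp [one_def, -r_zero]⟩
      mul_mem' := by
        rintro a b ⟨k, rfl⟩ ⟨j, rfl⟩
        exact ⟨k + j, by rw [r_mul_r]; ring_nf⟩
      inv_mem' := by
        rintro a ⟨k, rfl⟩
        exact ⟨-k, by rw [inv_r']; ring_nf⟩ }
  have : commutator (DihedralGroup n) ≤ H := by
    rw [commutator, Subgroup.commutator_le]
    rintro (a | a) - (b | b) -
    · exact ⟨0, by simp [commutatorElement_def, inv_r', r_mul_r, one_def, -r_zero]⟩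
    · refine ⟨a, ?_⟩
      simp only [commutatorElement_def, inv_r', inv_sr', r_mul_sr, sr_mul_r, sr_mul_sr, r_mul_r]
      congr 1; ring
    · refine ⟨-b, ?_⟩
      simp only [commutatorElement_def, inv_r', inv_sr', r_mul_sr, sr_mul_r, sr_mul_sr, r_mul_r]
      congr 1; ring
    · refine ⟨b - a, ?_⟩
      simp only [commutatorElement_def, inv_sr', sr_mul_sr, r_mul_sr, sr_mul_r, r_mul_r]
      congr 1; ring
  exact this hg

theorem stmt15 (n : ℕ) (hn : 3 ≤ n) (g : DihedralGroup n)
    (hg : g ∈ commutator (DihedralGroup n)) :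
    0 < f3 g := by
  haveI : NeZero n := ⟨by omega⟩
  obtain ⟨k, rfl⟩ := mem_comm_r2 g hg
  rw [f3, Nat.card_pos_iff]
  refine ⟨⟨⟨(.r (-k), .sr 0, .sr k), ?_, ?_, ?_⟩⟩, inferInstance⟩ <;>
    · simp only [inv_r', inv_sr', DihedralGroup.r_mul_sr, DihedralGroup.sr_mul_r,
        DihedralGroup.sr_mul_sr, DihedralGroup.r_mul_r]
      congr 1; ring
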